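/- Let K be an infinite field and L a finite-dimensional Lie algebra over K. If for every triple of elements x, y, z ∈ L the Lie subalgebra H of L generated by {x, y, z} is abelian-by-nilpotent (i.e., H has an abelian Lie ideal A with H/A nilpotent), then L is abelian-by-nilpotent. -/

import Mathlib

set_option linter.unusedSectionVars false
set_option maxHeartbeats 1000000

section Stab
variable {K V : Type*} [Field K] [AddCommGroup V] [Module K V] [FiniteDimensional K V]

lemma range_pow_antitone (f : Module.End K V) : ∀ {a b : ℕ}, a ≤ b →
    LinearMap.range (f ^ b) ≤ LinearMap.range (f ^ a) := by
  intro a b hab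
  obtain ⟨c, rfl⟩ := Nat.exists_eq_add_of_le hab
  rw [pow_add, Module.End.mul_eq_comp]
  exact LinearMap.range_comp_le_range _ _

lemma range_pow_succ_map (f : Module.End K V) (k : ℕ) :
    LinearMap.range (f ^ (k + 1)) = Submodule.map f (LinearMap.range (f ^ k)) := by
  rw [pow_succ', Module.End.mul_eq_comp, LinearMap.range_comp]

lemma range_pow_stab (f : Module.End K V) {m : ℕ} (hm : Module.finrank K V ≤ m) :
    LinearMap.range (f ^ m) = LinearMap.range (f ^ (Module.finrank K V)) := by
  set n := Module.finrank K V with hn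
  have hex : ∃ k ≤ n, LinearMap.range (f ^ (k+1)) = LinearMap.range (f ^ k) := by
    by_contra hcon
    push_neg at hcon
    have key : ∀ k ≤ n + 1, Module.finrank K (LinearMap.range (f ^ k)) + k ≤ n := by
      intro k hk
      induction k with
      | zero =>
        simpa using (Submodule.finrank_le (LinearMap.range (f ^ 0)))
      | succ k ih =>
        have hk' : k ≤ n := by omega
        have hlt : LinearMap.range (f ^ (k+1)) < LinearMap.range (f ^ k) :=
          lt_of_le_of_ne (range_pow_antitone f (Nat.le_succ k)) (hcon k hk')
        have := Submodule.finrank_lt_finrank_of_lt hlt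
        have := ih (by omega)
        omega
    have := key (n+1) le_rfl
    omega
  obtain ⟨k, hk, hstab⟩ := hex
  have hconst : ∀ j, LinearMap.range (f ^ (k + j)) = LinearMap.range (f ^ k) := by
    intro j
    induction j with
    | zero => rfl
    | succ j ih =>
      have : k + (j + 1) = (k + j) + 1 := by omega
      rw [this, range_pow_succ_map, ih, ← range_pow_succ_map, hstab]
  have h1 : LinearMap.range (f ^ m) = LinearMap.range (f ^ k) := by
    have := hconst (m - k); rw [Nat.add_sub_cancel' (by omega : k ≤ m)] at this; exact this
  have h2 : LinearMap.range (f ^ n) = LinearMap.range (f ^ k) := by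
    have := hconst (n - k); rw [Nat.add_sub_cancel' hk] at this; exact this
  rw [h1, h2]

lemma fitting_codisjoint (f : Module.End K V) (v : V) :
    ∃ u w : V, (f ^ (Module.finrank K V)) u = 0 ∧
      w ∈ LinearMap.range (f ^ (Module.finrank K V)) ∧ v = u + w := by
  set n := Module.finrank K V
  have h2n : LinearMap.range (f ^ (2 * n)) = LinearMap.range (f ^ n) :=
    range_pow_stab f (by omega)
  have hv : (f ^ n) v ∈ LinearMap.range (f ^ (2 * n)) := by
    rw [h2n]; exact ⟨v, rfl⟩
  obtain ⟨z, hz⟩ := hv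
  refine ⟨v - (f ^ n) z, (f ^ n) z, ?_, ⟨z, rfl⟩, by abel⟩
  have : (f ^ (2 * n)) z = ((f ^ n) * (f ^ n)) z := by rw [← pow_add]; ring_nf
  rw [map_sub, ← hz, this]
  simp [Module.End.mul_apply]
end Stab

section Leib
variable {K L : Type*} [Field K] [LieRing L] [LieAlgebra K L]

/-- Iterated Leibniz: if `(ad x)^k u = 0` then `⁅u, (ad x)^m w⁆ ∈ range (ad x)^(m+1-k)`. -/
lemma lie_adpow_mem_range (x : L) : ∀ (m k : ℕ) (u w : L),
    ((LieAlgebra.ad K L x) ^ k) u = 0 →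
    ⁅u, ((LieAlgebra.ad K L x) ^ m) w⁆ ∈ LinearMap.range ((LieAlgebra.ad K L x) ^ (m + 1 - k)) := by
  set D := LieAlgebra.ad K L x with hD
  have hrange : ∀ {a b : ℕ}, a ≤ b → LinearMap.range (D ^ b) ≤ LinearMap.range (D ^ a) := by
    intro a b hab
    obtain ⟨c, rfl⟩ := Nat.exists_eq_add_of_le hab
    rw [pow_add, Module.End.mul_eq_comp]
    exact LinearMap.range_comp_le_range _ _
  intro m
  induction m with
  | zero =>
    intro k u w hu
    rcases Nat.eq_zero_or_pos k with rfl | hk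
    · simp only [pow_zero, Module.End.one_apply] at hu
      subst hu; simp
    · have : 0 + 1 - k = 0 := by omega
      rw [this]; simp
  | succ m ih =>
    intro k u w hu
    rcases Nat.eq_zero_or_pos k with rfl | hk
    · simp only [pow_zero, Module.End.one_apply] at hu
      subst hu; simp
    · obtain ⟨k', rfl⟩ : ∃ k', k = k' + 1 := ⟨k - 1, by omega⟩
      have hsplit : ⁅u, (D ^ (m+1)) w⁆ = D ⁅u, (D ^ m) w⁆ - ⁅D u, (D ^ m) w⁆ := by
        have h1 : (D ^ (m+1)) w = D ((D ^ m) w) := by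
          rw [pow_succ', Module.End.mul_apply]
        rw [h1]
        have : D ⁅u, (D ^ m) w⁆ = ⁅D u, (D ^ m) w⁆ + ⁅u, D ((D ^ m) w)⁆ := by
          simp only [hD, LieAlgebra.ad_apply]
          exact leibniz_lie x u ((D ^ m) w)
        rw [this]; abel
      rw [hsplit]
      apply Submodule.sub_mem
      · obtain ⟨z, hz⟩ := ih (k'+1) u w hu
        have hmem : D ⁅u, (D ^ m) w⁆ ∈ LinearMap.range (D ^ (m + 1 - (k'+1) + 1)) := by
          refine ⟨z, ?_⟩
          rw [pow_succ', Module.End.mul_apply, hz]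
        exact hrange (by omega) hmem
      · have hu' : (D ^ k') (D u) = 0 := by
          rw [← Module.End.mul_apply, ← pow_succ]
          exact hu
        have h2 := ih k' (D u) w hu'
        have : m + 1 - k' = m + 1 + 1 - (k' + 1) := by omega
        rwa [this] at h2
end Leib

section Core
variable {K : Type*} {H : Type*} [Field K] [LieRing H] [LieAlgebra K H]

lemma range_adpow_le_lcs (y : H) (k : ℕ) (v : H) :
    ((LieAlgebra.ad K H y) ^ k) v ∈ LieModule.lowerCentralSeries K H H k := by
  induction k with
  | zero => simp
  | succ k ih =>
    rw [LieModule.lowerCentralSeries_succ]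
    have : ((LieAlgebra.ad K H y) ^ (k+1)) v = ⁅y, ((LieAlgebra.ad K H y) ^ k) v⁆ := by
      rw [pow_succ', Module.End.mul_apply, LieAlgebra.ad_apply]
    rw [this]
    exact LieSubmodule.lie_mem_lie (LieSubmodule.mem_top y) ih

variable [FiniteDimensional K H]

lemma mem_ideal_of_mem_stable_range (A : LieIdeal K H)
    (hnil : LieRing.IsNilpotent (H ⧸ A)) (y v : H)
    (hv : v ∈ LinearMap.range ((LieAlgebra.ad K H y) ^ (Module.finrank K H))) : v ∈ A := by
  obtain ⟨k₀, hk₀⟩ := (LieModule.isNilpotent_iff K _ _).mp hnil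
  set f := LieAlgebra.ad K H y
  set nH := Module.finrank K H with hnH
  have hlcs : v ∈ LieModule.lowerCentralSeries K H H k₀ := by
    have h1 : LinearMap.range (f ^ nH) = LinearMap.range (f ^ (max nH k₀)) := by
      rw [range_pow_stab f (le_max_left nH k₀)]
    rw [h1] at hv
    obtain ⟨z, hz⟩ := hv
    have := range_adpow_le_lcs (K := K) y (max nH k₀) z
    rw [hz] at this
    exact LieModule.antitone_lowerCentralSeries K H H (le_max_right nH k₀) this
  let π : H →ₗ⁅K⁆ H ⧸ A := { A.toSubmodule.mkQ with map_lie' := rfl }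
  have hπ : π v ∈ LieModule.lowerCentralSeries K (H ⧸ A) (H ⧸ A) k₀ :=
    LieIdeal.map_lowerCentralSeries_le k₀ (LieIdeal.mem_map hlcs)
  rw [hk₀, LieSubmodule.mem_bot] at hπ
  have h0 : A.toSubmodule.mkQ v = 0 := hπ
  rwa [Submodule.mkQ_apply, Submodule.Quotient.mk_eq_zero] at h0
end Core

section Coe
variable {K L : Type*} [Field K] [LieRing L] [LieAlgebra K L]

lemma adpow_coe (H : LieSubalgebra K L) (x v : H) (j : ℕ) :
    ((((LieAlgebra.ad K H x) ^ j) v : H) : L) = ((LieAlgebra.ad K L (x : L)) ^ j) (v : L) := by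
  induction j with
  | zero => simp
  | succ j ih =>
    rw [pow_succ', Module.End.mul_apply, pow_succ', Module.End.mul_apply, ← ih]
    rw [LieAlgebra.ad_apply, LieAlgebra.ad_apply]
    exact LieSubalgebra.coe_bracket _ _ _
end Coe


section Aux
variable {K L : Type*} [Field K] [LieRing L] [LieAlgebra K L] [FiniteDimensional K L]

lemma bracket_eq_zero_of_abelian_ideal (H : LieSubalgebra K L) (A : LieIdeal K H)
    (hab : IsLieAbelian A) (hnil : LieRing.IsNilpotent (H ⧸ A))
    {x₀ c c' : L} (hx : x₀ ∈ H) (hc : c ∈ H) (hc' : c' ∈ H) :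
    ⁅((LieAlgebra.ad K L x₀ ^ (Module.finrank K L)) c),
      ((LieAlgebra.ad K L x₀ ^ (Module.finrank K L)) c')⁆ = (0 : L) := by
  set n := Module.finrank K L with hn
  set xt : H := ⟨x₀, hx⟩ with hxt
  have hfin : FiniteDimensional K H := by
    have : FiniteDimensional K H.toSubmodule := inferInstance
    exact this
  have hn' : Module.finrank K H ≤ n := Submodule.finrank_le H.toSubmodule
  set fH := LieAlgebra.ad K H xt with hfH
  have hA : ((fH ^ n) ⟨c, hc⟩) ∈ A := by
    apply mem_ideal_of_mem_stable_range A hnil xt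
    rw [← range_pow_stab fH hn']
    exact ⟨⟨c, hc⟩, rfl⟩
  have hA' : ((fH ^ n) ⟨c', hc'⟩) ∈ A := by
    apply mem_ideal_of_mem_stable_range A hnil xt
    rw [← range_pow_stab fH hn']
    exact ⟨⟨c', hc'⟩, rfl⟩
  haveI := hab
  have h0 : ⁅(⟨(fH ^ n) ⟨c, hc⟩, hA⟩ : A), (⟨(fH ^ n) ⟨c', hc'⟩, hA'⟩ : A)⁆ = (0 : A) :=
    trivial_lie_zero _ _ _ _
  have h1 : ⁅((fH ^ n) ⟨c, hc⟩ : H), ((fH ^ n) ⟨c', hc'⟩ : H)⁆ = (0 : H) :=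
    congrArg Subtype.val h0
  have h2 : (((⁅((fH ^ n) ⟨c, hc⟩ : H), ((fH ^ n) ⟨c', hc'⟩ : H)⁆ : H)) : L) = (0 : L) := by
    rw [h1]; rfl
  rw [LieSubalgebra.coe_bracket] at h2
  rwa [adpow_coe H xt ⟨c, hc⟩ n, adpow_coe H xt ⟨c', hc'⟩ n] at h2

end Aux

/-- Theorem 8: over an infinite field, the class of abelian-by-nilpotent
finite-dimensional Lie algebras is 3-recognizable: if every subalgebra
generated by three elements is abelian-by-nilpotent, then so is `L`. -/
theorem abelianByNilpotent_of_three_generated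
    (K : Type*) (L : Type*) [Field K] [Infinite K]
    [LieRing L] [LieAlgebra K L] [FiniteDimensional K L]
    (h : ∀ x y z : L,
      ∃ A : LieIdeal K (LieSubalgebra.lieSpan K L {x, y, z}),
        IsLieAbelian A ∧
          LieRing.IsNilpotent ((LieSubalgebra.lieSpan K L {x, y, z}) ⧸ A)) :
    ∃ A : LieIdeal K L, IsLieAbelian A ∧ LieRing.IsNilpotent (L ⧸ A) := by
  classical
  obtain ⟨x₀, hcart⟩ := LieAlgebra.exists_isCartanSubalgebra_engel K L
  set n := Module.finrank K L with hn
  set D := LieAlgebra.ad K L x₀ with hDdef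
  set Wsub : Submodule K L := LinearMap.range (D ^ n) with hWdef
  -- W is abelian (this is where the hypothesis is used)
  have hWW : ∀ w ∈ Wsub, ∀ w' ∈ Wsub, ⁅w, w'⁆ = (0 : L) := by
    intro w hw w' hw'
    obtain ⟨c, hc⟩ := hw
    obtain ⟨c', hc'⟩ := hw'
    obtain ⟨A, hab, hnil⟩ := h x₀ c c'
    have hx : x₀ ∈ LieSubalgebra.lieSpan K L {x₀, c, c'} :=
      LieSubalgebra.subset_lieSpan (by simp)
    have hcm : c ∈ LieSubalgebra.lieSpan K L {x₀, c, c'} :=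
      LieSubalgebra.subset_lieSpan (by simp)
    have hc'm : c' ∈ LieSubalgebra.lieSpan K L {x₀, c, c'} :=
      LieSubalgebra.subset_lieSpan (by simp)
    have := bracket_eq_zero_of_abelian_ideal (LieSubalgebra.lieSpan K L {x₀, c, c'})
      A hab hnil hx hcm hc'm
    rwa [hc, hc'] at this
  -- ⁅engel, W⁆ ⊆ W
  have hCW : ∀ u ∈ LieSubalgebra.engel K x₀, ∀ w ∈ Wsub, ⁅u, w⁆ ∈ Wsub := by
    intro u hu w hw
    obtain ⟨k, hk⟩ := (LieSubalgebra.mem_engel_iff K x₀ u).mp hu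
    have hw' : w ∈ LinearMap.range (D ^ (n + k)) := by
      rw [range_pow_stab D (by omega)]
      exact hw
    obtain ⟨v, hv⟩ := hw'
    have := lie_adpow_mem_range (K := K) x₀ (n + k) k u v hk
    rw [hv] at this
    have heq : n + k + 1 - k = n + 1 := by omega
    rw [heq] at this
    exact range_pow_antitone D (Nat.le_succ n) this
  -- decomposition L = engel + W
  have hdecomp : ∀ z : L, ∃ u w : L, u ∈ LieSubalgebra.engel K x₀ ∧ w ∈ Wsub ∧ z = u + w := by
    intro z
    obtain ⟨u, w, hu, hw, hz⟩ := fitting_codisjoint D z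
    exact ⟨u, w, (LieSubalgebra.mem_engel_iff K x₀ u).mpr ⟨n, hu⟩, hw, hz⟩
  -- W is an ideal
  let W : LieIdeal K L :=
    { Wsub with
      lie_mem := by
        intro z m hm
        obtain ⟨u, w', hu, hw', rfl⟩ := hdecomp z
        have hm' : m ∈ Wsub := hm
        show ⁅u + w', m⁆ ∈ Wsub
        rw [add_lie]
        refine Submodule.add_mem _ (hCW u hu m hm') ?_
        rw [hWW w' hw' m hm']
        exact Submodule.zero_mem _ }
  have hmemW : ∀ z : L, z ∈ W ↔ z ∈ Wsub := fun z => Iff.rfl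
  refine ⟨W, ?_, ?_⟩
  · constructor
    intro a b
    apply Subtype.ext
    have : (↑(⁅a, b⁆ : W) : L) = ⁅(a : L), (b : L)⁆ := rfl
    rw [this]
    exact hWW _ a.2 _ b.2
  · -- L ⧸ W is nilpotent: C = engel surjects onto it
    haveI hnilC : LieRing.IsNilpotent (LieSubalgebra.engel K x₀) := hcart.nilpotent
    let π : L →ₗ⁅K⁆ L ⧸ W := { W.toSubmodule.mkQ with map_lie' := rfl }
    let φ : (LieSubalgebra.engel K x₀ : LieSubalgebra K L) →ₗ⁅K⁆ L ⧸ W :=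
      π.comp (LieSubalgebra.engel K x₀).incl
    have hφ : Function.Surjective φ := by
      intro q
      obtain ⟨z, rfl⟩ := Submodule.mkQ_surjective W.toSubmodule q
      obtain ⟨u, w, hu, hw, rfl⟩ := hdecomp z
      refine ⟨⟨u, hu⟩, ?_⟩
      show W.toSubmodule.mkQ u = W.toSubmodule.mkQ (u + w)
      rw [map_add]
      have hw0 : W.toSubmodule.mkQ w = 0 := by
        rw [Submodule.mkQ_apply, Submodule.Quotient.mk_eq_zero]
        exact hw
      rw [hw0, add_zero]
    exact Function.Surjective.lieAlgebra_isNilpotent (f := φ) hφ
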